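/- Let D be a weighted digraph on a finite vertex set V and let M be a matching in D, i.e., a set of arcs of D such that no two distinct arcs of M share any endpoint. Let w(M) denote the total weight of the arcs in M. Then mac(D) ≥ w(D)/4 + w(M)/4. -/
import Mathlib


open scoped BigOperators Classical

noncomputable section

namespace PaperStmt

variable {V : Type*} [Fintype V]

/-- Total weight of a weighted digraph given by `w : V → V → ℝ`. -/
def totalWeight (w : V → V → ℝ) : ℝ := ∑ u, ∑ v, w u v

/-- Weight of the dicut `(X, Xᶜ)`. -/
def cutWeight (w : V → V → ℝ) (X : Finset V) : ℝ := ∑ x ∈ X, ∑ y ∈ Xᶜ, w x y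

/-- Maximum weight of a directed cut. -/
def mac (w : V → V → ℝ) : ℝ :=
  Finset.univ.sup' ⟨∅, Finset.mem_univ ∅⟩ (fun X : Finset V => cutWeight w X)

/-- `r(v) = w⁺(v) - w⁻(v)`. -/
def rv (w : V → V → ℝ) (v : V) : ℝ := (∑ u, w v u) - (∑ u, w u v)

/-- `r⁺(D) = ∑_{v : r(v) > 0} r(v)`. -/
def rPlus (w : V → V → ℝ) : ℝ :=
  ∑ v ∈ Finset.univ.filter (fun v => 0 < rv w v), rv w v

section Aux

open Finset Function

private lemma flipcard (a : V) (P Q : (V → Bool) → Prop)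
    [DecidablePred P] [DecidablePred Q]
    (h1 : ∀ σ : V → Bool, P σ → Q (Function.update σ a (!(σ a))))
    (h2 : ∀ σ : V → Bool, Q σ → P (Function.update σ a (!(σ a)))) :
    (Finset.univ.filter P).card = (Finset.univ.filter Q).card := by
  refine Finset.card_bij' (fun σ _ => Function.update σ a (!(σ a)))
    (fun σ _ => Function.update σ a (!(σ a))) ?_ ?_ ?_ ?_
  · intro σ hσ
    simp only [mem_filter, mem_univ, true_and] at hσ ⊢
    exact h1 σ hσ
  · intro σ hσ
    simp only [mem_filter, mem_univ, true_and] at hσ ⊢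
    exact h2 σ hσ
  · intro σ hσ
    simp [Function.update_idem, Function.update_eq_self]
  · intro σ hσ
    simp [Function.update_idem, Function.update_eq_self]

private lemma unioncard (P Q R : (V → Bool) → Prop)
    [DecidablePred P] [DecidablePred Q] [DecidablePred R]
    (h : ∀ σ : V → Bool, (R σ ↔ (P σ ∨ Q σ)) ∧ ¬ (P σ ∧ Q σ)) :
    (Finset.univ.filter P).card + (Finset.univ.filter Q).card
      = (Finset.univ.filter R).card := by
  rw [← Finset.card_union_of_disjoint]
  · congr 1
    ext σ
    simp only [mem_union, mem_filter, mem_univ, true_and]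
    exact ((h σ).1).symm
  · rw [Finset.disjoint_left]
    intro σ hP hQ
    simp only [mem_filter, mem_univ, true_and] at hP hQ
    exact (h σ).2 ⟨hP, hQ⟩

private lemma cardOne (a : V) (p : Bool) :
    2 * (Finset.univ.filter (fun σ : V → Bool => σ a = p)).card = 2 ^ Fintype.card V := by
  have hflip : (Finset.univ.filter (fun σ : V → Bool => σ a = p)).card
      = (Finset.univ.filter (fun σ : V → Bool => ¬ σ a = p)).card :=
    flipcard a _ _ (by intro σ h; simp [h])
      (by intro σ h; simp; revert h; cases p <;> cases h' : σ a <;> simp [h'])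
  have hu : (Finset.univ.filter (fun σ : V → Bool => σ a = p)).card
      + (Finset.univ.filter (fun σ : V → Bool => ¬ σ a = p)).card
      = (Finset.univ.filter (fun _ : V → Bool => True)).card :=
    unioncard _ _ _ (fun σ => ⟨by simp [em], by tauto⟩)
  have hcard : (Finset.univ.filter (fun _ : V → Bool => True)).card = 2 ^ Fintype.card V := by
    rw [Finset.filter_true, Finset.card_univ, Fintype.card_fun, Fintype.card_bool]
  linarith

private lemma cardTwo {a b : V} (hab : a ≠ b) (p q : Bool) :
    4 * (Finset.univ.filter (fun σ : V → Bool => σ a = p ∧ ¬ σ b = q)).card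
      = 2 ^ Fintype.card V := by
  have hflip : (Finset.univ.filter (fun σ : V → Bool => σ a = p ∧ σ b = q)).card
      = (Finset.univ.filter (fun σ : V → Bool => σ a = p ∧ ¬ σ b = q)).card :=
    flipcard b _ _
    (by
      intro σ h
      refine ⟨by simpa [Function.update_of_ne hab] using h.1, ?_⟩
      simp [h.2])
    (by
      intro σ h
      refine ⟨by simpa [Function.update_of_ne hab] using h.1, ?_⟩
      have hh := h.2
      simp only [Function.update_self]
      revert hh
      cases q <;> cases h' : σ b <;> simp [h'])
  have hu : (Finset.univ.filter (fun σ : V → Bool => σ a = p ∧ σ b = q)).card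
      + (Finset.univ.filter (fun σ : V → Bool => σ a = p ∧ ¬ σ b = q)).card
      = (Finset.univ.filter (fun σ : V → Bool => σ a = p)).card :=
    unioncard _ _ _ (fun σ => ⟨by tauto, by tauto⟩)
  have h1 := cardOne a p (V := V)
  linarith

/-- representative of a vertex: the tail of the matching arc whose head it is, else itself. -/
private noncomputable def repM (M : Finset (V × V)) (v : V) : V :=
  if h : ∃ e ∈ M, e.2 = v then h.choose.1 else v

private noncomputable def sgnM (M : Finset (V × V)) (v : V) : Bool :=
  if ∃ e ∈ M, e.2 = v then false else true

end Aux

theorem matching_lower_bound {V : Type*} [Fintype V] [Nonempty V]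
    (w : V → V → ℝ) (hnn : ∀ u v, 0 ≤ w u v) (hdiag : ∀ v, w v v = 0)
    (M : Finset (V × V)) (hMarc : ∀ a ∈ M, 0 < w a.1 a.2)
    (hMatch : ∀ a ∈ M, ∀ b ∈ M, a ≠ b →
      a.1 ≠ b.1 ∧ a.1 ≠ b.2 ∧ a.2 ≠ b.1 ∧ a.2 ≠ b.2) :
    totalWeight w / 4 + (∑ a ∈ M, w a.1 a.2) / 4 ≤ mac w := by
  classical
  -- structural facts about the matching
  have hne2 : ∀ e ∈ M, e.1 ≠ e.2 := by
    intro e he h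
    have h2 := hMarc e he
    rw [h, hdiag] at h2
    exact lt_irrefl _ h2
  have hheadU : ∀ e ∈ M, ∀ f ∈ M, e.2 = f.2 → e = f := by
    intro e he f hf h
    by_contra hne
    exact ((hMatch e he f hf hne).2.2.2) h
  have htailhead : ∀ e ∈ M, ∀ f ∈ M, e.1 ≠ f.2 := by
    intro e he f hf h
    by_cases hef : e = f
    · exact hne2 e he (hef ▸ h)
    · exact (hMatch e he f hf hef).2.1 h
  have hF1 : ∀ e ∈ M, repM M e.2 = e.1 ∧ sgnM M e.2 = false := by
    intro e he
    have hx : ∃ f ∈ M, f.2 = e.2 := ⟨e, he, rfl⟩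
    have spec := hx.choose_spec
    have heq : hx.choose = e := hheadU _ spec.1 e he spec.2
    unfold repM sgnM
    rw [dif_pos hx, if_pos hx, heq]
    exact ⟨rfl, rfl⟩
  have hF2 : ∀ e ∈ M, repM M e.1 = e.1 ∧ sgnM M e.1 = true := by
    intro e he
    have hx : ¬ ∃ f ∈ M, f.2 = e.1 := by
      rintro ⟨f, hf, h⟩
      exact htailhead e he f hf h.symm
    unfold repM sgnM
    rw [dif_neg hx, if_neg hx]
    exact ⟨rfl, rfl⟩
  have hF3 : ∀ u v, repM M u = repM M v → sgnM M u = sgnM M v → u = v := by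
    intro u v hr hs
    by_cases hu : ∃ e ∈ M, e.2 = u <;> by_cases hv : ∃ f ∈ M, f.2 = v
    · have su := hu.choose_spec
      have sv := hv.choose_spec
      have hru : repM M u = hu.choose.1 := by unfold repM; rw [dif_pos hu]
      have hrv : repM M v = hv.choose.1 := by unfold repM; rw [dif_pos hv]
      by_cases hef : hu.choose = hv.choose
      · rw [← su.2, ← sv.2, hef]
      · exact absurd (hru ▸ hrv ▸ hr) ((hMatch _ su.1 _ sv.1 hef).1)
    · have h1 : sgnM M u = false := by unfold sgnM; rw [if_pos hu]
      have h2 : sgnM M v = true := by unfold sgnM; rw [if_neg hv]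
      rw [h1, h2] at hs; cases hs
    · have h1 : sgnM M u = true := by unfold sgnM; rw [if_neg hu]
      have h2 : sgnM M v = false := by unfold sgnM; rw [if_pos hv]
      rw [h1, h2] at hs; cases hs
    · have h1 : repM M u = u := by unfold repM; rw [dif_neg hu]
      have h2 : repM M v = v := by unfold repM; rw [dif_neg hv]
      rw [h1, h2] at hr; exact hr
  set n := Fintype.card V with hn
  set K : ℝ := (2 : ℝ) ^ n with hK
  have hKpos : (0 : ℝ) < K := by positivity
  have hKcast : ((2 ^ n : ℕ) : ℝ) = K := by rw [hK]; push_cast; ring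
  -- the cut determined by σ
  have hcut : ∀ σ : V → Bool,
      cutWeight w (Finset.univ.filter (fun v => σ (repM M v) = sgnM M v))
        = ∑ u, ∑ v, (if σ (repM M u) = sgnM M u ∧ ¬ σ (repM M v) = sgnM M v
            then w u v else 0) := by
    intro σ
    unfold cutWeight
    rw [Finset.compl_filter, Finset.sum_filter]
    refine Finset.sum_congr rfl ?_
    intro u _
    rw [Finset.sum_filter]
    by_cases h : σ (repM M u) = sgnM M u <;> simp [h]
  have hmac : ∀ σ : V → Bool,
      cutWeight w (Finset.univ.filter (fun v => σ (repM M v) = sgnM M v)) ≤ mac w :=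
    fun σ => Finset.le_sup' (fun X : Finset V => cutWeight w X) (Finset.mem_univ _)
  have hsum1 : ∑ σ : V → Bool,
      cutWeight w (Finset.univ.filter (fun v => σ (repM M v) = sgnM M v)) ≤ K * mac w := by
    calc ∑ σ : V → Bool, cutWeight w (Finset.univ.filter (fun v => σ (repM M v) = sgnM M v))
        ≤ ∑ _σ : V → Bool, mac w := Finset.sum_le_sum (fun σ _ => hmac σ)
      _ = K * mac w := by
          rw [Finset.sum_const, nsmul_eq_mul, Finset.card_univ, Fintype.card_fun,
            Fintype.card_bool, ← hn, hKcast]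
  have hsum2 : ∑ σ : V → Bool,
      cutWeight w (Finset.univ.filter (fun v => σ (repM M v) = sgnM M v))
      = ∑ u, ∑ v, ((Finset.univ.filter (fun σ : V → Bool =>
          σ (repM M u) = sgnM M u ∧ ¬ σ (repM M v) = sgnM M v)).card : ℝ) * w u v := by
    rw [Finset.sum_congr rfl (fun σ _ => hcut σ)]
    rw [Finset.sum_comm]
    refine Finset.sum_congr rfl (fun u _ => ?_)
    rw [Finset.sum_comm]
    refine Finset.sum_congr rfl (fun v _ => ?_)
    rw [Finset.sum_ite, Finset.sum_const, Finset.sum_const_zero, add_zero, nsmul_eq_mul]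
  -- the key per-term bound
  have hterm : ∀ u v : V,
      K / 4 * w u v + (if (u, v) ∈ M then K / 4 * w u v else 0)
        ≤ ((Finset.univ.filter (fun σ : V → Bool =>
            σ (repM M u) = sgnM M u ∧ ¬ σ (repM M v) = sgnM M v)).card : ℝ) * w u v := by
    intro u v
    by_cases hw : w u v = 0
    · simp [hw]
    have hwpos : 0 < w u v := lt_of_le_of_ne (hnn u v) (Ne.symm hw)
    have huv : u ≠ v := by
      intro h
      rw [h, hdiag] at hwpos
      exact lt_irrefl _ hwpos
    by_cases hM : (u, v) ∈ M
    · rw [if_pos hM]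
      have h1 := hF1 (u, v) hM
      have h2 := hF2 (u, v) hM
      rw [show repM M u = u from h2.1, show sgnM M u = true from h2.2,
        show repM M v = u from h1.1, show sgnM M v = false from h1.2]
      have heqf : (Finset.univ.filter (fun σ : V → Bool => σ u = true ∧ ¬ σ u = false))
          = Finset.univ.filter (fun σ : V → Bool => σ u = true) := by
        ext σ
        simp
      rw [heqf]
      have hco := cardOne u true (V := V)
      have hcoR : ((Finset.univ.filter (fun σ : V → Bool => σ u = true)).card : ℝ) = K / 2 := by
        have h3 := congrArg (fun m : ℕ => (m : ℝ)) hco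
        push_cast at h3
        rw [hn] at hKcast
        push_cast at hKcast
        linarith
      rw [hcoR]
      nlinarith [hwpos]
    · rw [if_neg hM, add_zero]
      have hcard : K / 4 ≤ ((Finset.univ.filter (fun σ : V → Bool =>
          σ (repM M u) = sgnM M u ∧ ¬ σ (repM M v) = sgnM M v)).card : ℝ) := by
        by_cases hr : repM M u = repM M v
        · have hs : sgnM M u ≠ sgnM M v := fun h => huv (hF3 u v hr h)
          have heqf : (Finset.univ.filter (fun σ : V → Bool =>
              σ (repM M u) = sgnM M u ∧ ¬ σ (repM M v) = sgnM M v))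
              = Finset.univ.filter (fun σ : V → Bool => σ (repM M u) = sgnM M u) := by
            ext σ
            simp only [Finset.mem_filter, Finset.mem_univ, true_and, and_iff_left_iff_imp]
            intro h hcon
            exact hs (by rw [← h, hr, hcon])
          rw [heqf]
          have hco := cardOne (repM M u) (sgnM M u) (V := V)
          have h3 := congrArg (fun m : ℕ => (m : ℝ)) hco
          push_cast at h3
          rw [hn] at hKcast
          push_cast at hKcast
          linarith
        · have hct := cardTwo hr (sgnM M u) (sgnM M v)
          have h3 := congrArg (fun m : ℕ => (m : ℝ)) hct
          push_cast at h3
          rw [hn] at hKcast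
          push_cast at hKcast
          linarith
      exact mul_le_mul_of_nonneg_right hcard (hnn u v)
  -- summing the bound
  have hA : ∑ u, ∑ v, K / 4 * w u v = K / 4 * totalWeight w := by
    unfold totalWeight
    rw [Finset.mul_sum]
    exact Finset.sum_congr rfl (fun u _ => (Finset.mul_sum _ _ _).symm)
  have hB : ∑ u, ∑ v, (if (u, v) ∈ M then K / 4 * w u v else 0)
      = K / 4 * ∑ a ∈ M, w a.1 a.2 := by
    rw [← Finset.sum_product']
    rw [Finset.univ_product_univ]
    rw [Finset.sum_ite_mem, Finset.univ_inter, Finset.mul_sum]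
  have hfinal : K / 4 * totalWeight w + K / 4 * (∑ a ∈ M, w a.1 a.2) ≤ K * mac w := by
    calc K / 4 * totalWeight w + K / 4 * (∑ a ∈ M, w a.1 a.2)
        = ∑ u, ∑ v, (K / 4 * w u v + (if (u, v) ∈ M then K / 4 * w u v else 0)) := by
          rw [← hA, ← hB, ← Finset.sum_add_distrib]
          exact Finset.sum_congr rfl (fun u _ => (Finset.sum_add_distrib).symm)
      _ ≤ ∑ u, ∑ v, ((Finset.univ.filter (fun σ : V → Bool =>
            σ (repM M u) = sgnM M u ∧ ¬ σ (repM M v) = sgnM M v)).card : ℝ) * w u v :=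
          Finset.sum_le_sum (fun u _ => Finset.sum_le_sum (fun v _ => hterm u v))
      _ ≤ K * mac w := by rw [← hsum2]; exact hsum1
  have h2 : K * (totalWeight w / 4 + (∑ a ∈ M, w a.1 a.2) / 4) ≤ K * mac w := by
    calc K * (totalWeight w / 4 + (∑ a ∈ M, w a.1 a.2) / 4)
        = K / 4 * totalWeight w + K / 4 * (∑ a ∈ M, w a.1 a.2) := by ring
      _ ≤ K * mac w := hfinal
  exact le_of_mul_le_mul_left h2 hKpos

end PaperStmt
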